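/- Let D be a small category, Φ : D → Cat a functor into the category of small categories, and (C, (ι_d : Φ(d) → C)_{d ∈ D}) a colimit cocone for Φ in Cat. Let E be a cocomplete category and X : C → E a functor. For each object d of D, let L(d) = colim_{Φ(d)} (ι_d ⋙ X); this extends to a functor L : D → E (for δ : d → d', the map L(d) → L(d') is induced by Φ(δ), using ι_{d'} ∘ Φ(δ) = ι_d). Then the canonical morphism colim_D L → colim_C X, induced by the comparison maps colim_{Φ(d)}(ι_d ⋙ X) → colim_C X, is an isomorphism. -/

import Mathlib

open CategoryTheory CategoryTheory.Limits

universe v u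

namespace Statement17Aux

variable {C : Type u} [Category.{u} C] {E : Type v} [Category.{u} E]

/-- The small category of pairs `(x : C, X.obj x ⟶ P)`. -/
structure W (X : C ⥤ E) (P : E) : Type u where
  pt : C
  hom : X.obj pt ⟶ P

@[ext]
structure WHom {X : C ⥤ E} {P : E} (a b : W X P) : Type u where
  hom : a.pt ⟶ b.pt
  w : X.map hom ≫ b.hom = a.hom

instance (X : C ⥤ E) (P : E) : Category.{u} (W X P) where
  Hom := WHom
  id a := ⟨𝟙 a.pt, by simp⟩
  comp f g := ⟨f.hom ≫ g.hom, by rw [Functor.map_comp, Category.assoc, g.w, f.w]⟩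

variable {X : C ⥤ E} {P : E}

@[simp] lemma W.id_hom (a : W X P) : WHom.hom (𝟙 a) = 𝟙 a.pt := rfl

@[simp] lemma W.comp_hom {a b d : W X P} (f : a ⟶ b) (g : b ⟶ d) :
    WHom.hom (f ≫ g) = f.hom ≫ g.hom := rfl

@[simp] lemma W.eqToHom_hom {a b : W X P} (h : a = b) :
    WHom.hom (eqToHom h) = eqToHom (congrArg W.pt h) := by subst h; rfl

lemma W.ext' {a b : W X P} (h : a.pt = b.pt)
    (h2 : a.hom = eqToHom (by rw [h]) ≫ b.hom) : a = b := by
  cases a; cases b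
  dsimp at h
  subst h
  simp only [eqToHom_refl, Category.id_comp] at h2
  subst h2
  rfl

lemma W.hom_eq {a b : W X P} (h : a = b) :
    a.hom = eqToHom (by rw [h]) ≫ b.hom := by subst h; simp

/-- Projection to `C`. -/
def proj (X : C ⥤ E) (P : E) : W X P ⥤ C where
  obj a := a.pt
  map f := f.hom

@[simp] lemma proj_obj (a : W X P) : (proj X P).obj a = a.pt := rfl
@[simp] lemma proj_map {a b : W X P} (f : a ⟶ b) : (proj X P).map f = f.hom := rfl

/-- Pushforward along `u : P ⟶ Q`. -/
def push (X : C ⥤ E) {P Q : E} (u : P ⟶ Q) : W X P ⥤ W X Q where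
  obj a := ⟨a.pt, a.hom ≫ u⟩
  map f := ⟨f.hom, by rw [← Category.assoc, f.w]⟩

@[simp] lemma push_obj_pt {Q : E} (u : P ⟶ Q) (a : W X P) :
    ((push X u).obj a).pt = a.pt := rfl
@[simp] lemma push_obj_hom {Q : E} (u : P ⟶ Q) (a : W X P) :
    ((push X u).obj a).hom = a.hom ≫ u := rfl
@[simp] lemma push_map_hom {Q : E} (u : P ⟶ Q) {a b : W X P} (f : a ⟶ b) :
    WHom.hom ((push X u).map f) = f.hom := rfl

end Statement17Aux

open Statement17Aux

/-- Let `D` be a small category, `Φ : D ⥤ Cat`, and `(c.pt, (c.ι.app d)_d)` a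
colimit cocone for `Φ` in `Cat`. Let `E` be a cocomplete category and
`X : c.pt ⥤ E` a functor. Let `L : D ⥤ E` be the functor with
`L.obj d = colimit (c.ι.app d ⋙ X)` whose action on a morphism `δ : d ⟶ d'` is
induced by `Φ.map δ` (this is expressed by the hypotheses `hobj` and `hmap`).
Then the canonical morphism `colimit L ⟶ colimit X` induced by the comparison
maps `colimit (c.ι.app d ⋙ X) ⟶ colimit X` is an isomorphism. -/
theorem statement_17 {D : Type u} [SmallCategory D] (Φ : D ⥤ Cat.{u, u})
    (c : Cocone Φ) (hc : IsColimit c)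
    {E : Type v} [Category.{u} E] [HasColimitsOfSize.{u, u} E]
    (X : (c.pt : Type u) ⥤ E)
    (L : D ⥤ E)
    (hobj : ∀ d : D, L.obj d = colimit ((c.ι.app d).toFunctor ⋙ X))
    (hmap : ∀ {d d' : D} (δ : d ⟶ d') (a : Φ.obj d),
      colimit.ι ((c.ι.app d).toFunctor ⋙ X) a ≫ eqToHom (hobj d).symm ≫ L.map δ ≫
          eqToHom (hobj d') =
        eqToHom (show X.obj ((c.ι.app d).toFunctor.obj a) =
              X.obj ((c.ι.app d').toFunctor.obj ((Φ.map δ).toFunctor.obj a)) by rw [← c.w δ]; rfl) ≫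
          colimit.ι ((c.ι.app d').toFunctor ⋙ X) ((Φ.map δ).toFunctor.obj a))
    (u : colimit L ⟶ colimit X)
    (hu : ∀ d : D, colimit.ι L d ≫ u =
      eqToHom (hobj d) ≫ colimit.pre X (c.ι.app d).toFunctor) :
    IsIso u := by
  -- the component functors of the cocone over Φ with vertex `W X (colimit L)`
  let sd : ∀ d : D, (Φ.obj d : Type u) ⥤ W X (colimit L) := fun d =>
    { obj := fun a => ⟨(c.ι.app d).toFunctor.obj a,
        colimit.ι ((c.ι.app d).toFunctor ⋙ X) a ≫ eqToHom (hobj d).symm ≫ colimit.ι L d⟩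
      map := fun {a b} f => ⟨(c.ι.app d).toFunctor.map f, by
        dsimp only
        rw [← Category.assoc, ← Functor.comp_map (c.ι.app d).toFunctor X, colimit.w]⟩ }
  have hcofork : ∀ {d d' : D} (δ : d ⟶ d'), (Φ.map δ).toFunctor ⋙ sd d' = sd d := by
    intro d d' δ
    refine CategoryTheory.Functor.ext (fun a => ?_) (fun a b f => ?_)
    · 
      have hpt : (c.ι.app d').toFunctor.obj ((Φ.map δ).toFunctor.obj a) = (c.ι.app d).toFunctor.obj a := by
        rw [← c.w δ]; rfl
      apply W.ext' hpt
      have key : colimit.ι ((c.ι.app d').toFunctor ⋙ X) ((Φ.map δ).toFunctor.obj a) =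
          eqToHom (show X.obj ((c.ι.app d').toFunctor.obj ((Φ.map δ).toFunctor.obj a)) =
              X.obj ((c.ι.app d).toFunctor.obj a) by rw [hpt]) ≫
            colimit.ι ((c.ι.app d).toFunctor ⋙ X) a ≫ eqToHom (hobj d).symm ≫ L.map δ ≫
            eqToHom (hobj d') := by
        rw [hmap δ a]; simp
      dsimp [sd]
      rw [key]
      simp [colimit.w L δ]
    · apply WHom.ext
      simp only [Functor.comp_map, W.comp_hom, W.eqToHom_hom]
      exact Functor.congr_hom (congrArg Cat.Hom.toFunctor (c.w δ)) f
  -- the cocone over Φ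
  let κ : Cocone Φ :=
    { pt := Cat.of (W X (colimit L))
      ι :=
        { app := fun d => (sd d).toCatHom
          naturality := fun d d' δ => by
            dsimp
            exact Cat.ext (hcofork δ) } }
  have hfac : ∀ d : D, c.ι.app d ≫ hc.desc κ = (sd d).toCatHom := fun d => hc.fac κ d
  -- the descended functor is a section over `c.pt`
  have hsec : (hc.desc κ ≫ ((proj X (colimit L)).toCatHom :
      Cat.of (W X (colimit L)) ⟶ c.pt)) = 𝟙 c.pt := by
    apply hc.hom_ext
    intro d
    rw [← Category.assoc, hfac d]
    rfl
  have hpt : ∀ x : (c.pt : Type u), ((hc.desc κ).toFunctor.obj x).pt = x := fun x =>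
    Functor.congr_obj (congrArg Cat.Hom.toFunctor hsec) x
  -- the induced cocone over X with vertex `colimit L`
  let ξ : Cocone X :=
    { pt := colimit L
      ι :=
        { app := fun x => eqToHom (congrArg X.obj (hpt x).symm) ≫
            ((hc.desc κ).toFunctor.obj x).hom
          naturality := fun x y h => by
            have hw := ((hc.desc κ).toFunctor.map h).w
            have hh : ((hc.desc κ).toFunctor.map h).hom =
                eqToHom (hpt x) ≫ h ≫ eqToHom (hpt y).symm :=
              Functor.congr_hom (congrArg Cat.Hom.toFunctor hsec) h
            rw [hh] at hw
            dsimp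
            rw [Category.comp_id, ← hw]
            simp [eqToHom_map] } }
  let v : colimit X ⟶ colimit L := colimit.desc X ξ
  have huv : u ≫ v = 𝟙 (colimit L) := by
    apply colimit.hom_ext
    intro d
    rw [← Category.assoc, hu d, Category.comp_id, Category.assoc]
    have hpre : colimit.pre X (c.ι.app d).toFunctor ≫ v =
        eqToHom (hobj d).symm ≫ colimit.ι L d := by
      apply colimit.hom_ext
      intro a
      rw [← Category.assoc, colimit.ι_pre]
      show colimit.ι X ((c.ι.app d).toFunctor.obj a) ≫ v = _
      rw [colimit.ι_desc]
      have heq : (hc.desc κ).toFunctor.obj ((c.ι.app d).toFunctor.obj a) = (sd d).obj a :=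
        Functor.congr_obj (congrArg Cat.Hom.toFunctor (hfac d)) a
      have hh := W.hom_eq heq
      dsimp [ξ]
      rw [hh]
      dsimp [sd]
      simp
    rw [hpre]
    simp
  let tfun : (c.pt : Type u) ⥤ W X (colimit X) :=
    { obj := fun x => ⟨x, colimit.ι X x⟩
      map := fun {x y} h => ⟨h, colimit.w X h⟩
      map_id := fun x => by apply WHom.ext; rfl
      map_comp := fun f g => by apply WHom.ext; rfl }
  let pushhom : Cat.of (W X (colimit L)) ⟶ Cat.of (W X (colimit X)) := (push X u).toCatHom
  let tcat : c.pt ⟶ Cat.of (W X (colimit X)) := tfun.toCatHom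
  have hst : hc.desc κ ≫ pushhom = tcat := by
    apply hc.hom_ext
    intro d
    rw [← Category.assoc, hfac d]
    apply Cat.ext
    show sd d ⋙ push X u = (c.ι.app d).toFunctor ⋙ tfun
    refine CategoryTheory.Functor.ext (fun a => ?_) (fun a b f => ?_)
    · show W.mk ((c.ι.app d).toFunctor.obj a) _ = W.mk ((c.ι.app d).toFunctor.obj a) _
      congr 1
      show (colimit.ι ((c.ι.app d).toFunctor ⋙ X) a ≫ eqToHom (hobj d).symm ≫
          colimit.ι L d) ≫ u = colimit.ι X ((c.ι.app d).toFunctor.obj a)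
      simp only [Category.assoc, hu d, eqToHom_trans_assoc, eqToHom_refl,
        Category.id_comp]
      exact colimit.ι_pre X (c.ι.app d).toFunctor a
    · apply WHom.ext
      simp only [W.comp_hom, W.eqToHom_hom]
      rw [conj_eqToHom_iff_heq']
      exact HEq.rfl
  have hvu : v ≫ u = 𝟙 (colimit X) := by
    apply colimit.hom_ext
    intro x
    rw [← Category.assoc, colimit.ι_desc]
    have heq := Functor.congr_obj (congrArg Cat.Hom.toFunctor hst) x
    have hh := W.hom_eq heq
    have hh2 : ((hc.desc κ).toFunctor.obj x).hom ≫ u =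
        eqToHom (show X.obj ((hc.desc κ).toFunctor.obj x).pt = X.obj x by rw [hpt x]) ≫
          colimit.ι X x := hh
    dsimp [ξ]
    rw [Category.assoc, hh2]
    simp
  exact ⟨v, huv, hvu⟩
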